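/- Impartial scoring play games form a non-trivial monoid under the selective sum: in particular the game i = {{0|0|0}|0|{0|0|0}} satisfies i ▽ G ≈ G for all impartial scoring games G (i.e., (i ▽ G)_F^{SL} has the same sign as G_F^{SL} and (i ▽ G)_F^{SR} has the same sign as G_F^{SR}), and i is not isomorphic to {.|0|.}, so the identity set contains more than one element. -/

import Mathlib

inductive SGame : Type where
  | mk (score : ℝ) (L R : List SGame)

namespace SGame

def score : SGame → ℝ | .mk s _ _ => s
def L : SGame → List SGame | .mk _ l _ => l
def R : SGame → List SGame | .mk _ _ r => r

mutual
  noncomputable def leftScore : SGame → ℝ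
    | .mk s l _ => WithBot.unbotD s ((l.attach.map fun x => rightScore x.1).maximum)
  termination_by g => sizeOf g
  decreasing_by
    have := List.sizeOf_lt_of_mem x.2
    simp only [SGame.mk.sizeOf_spec]
    omega
  noncomputable def rightScore : SGame → ℝ
    | .mk s _ r => WithTop.untopD s ((r.attach.map fun x => leftScore x.1).minimum)
  termination_by g => sizeOf g
  decreasing_by
    have := List.sizeOf_lt_of_mem x.2
    simp only [SGame.mk.sizeOf_spec]
    omega
end

/-- Conjunctive sum: move in all components simultaneously. -/
def conj : SGame → SGame → SGame
  | .mk s l r, .mk t l' r' =>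
    .mk (s + t)
      (l.attach.flatMap fun x => l'.attach.map fun y => conj x.1 y.1)
      (r.attach.flatMap fun x => r'.attach.map fun y => conj x.1 y.1)
termination_by G H => sizeOf G + sizeOf H
decreasing_by
  all_goals
    have h1 := List.sizeOf_lt_of_mem x.2
    have h2 := List.sizeOf_lt_of_mem y.2
    simp only [SGame.mk.sizeOf_spec]
    omega

/-- Selective sum: move in any nonempty subset of the components. -/
def sel : SGame → SGame → SGame
  | .mk s l r, .mk t l' r' =>
    .mk (s + t)
      ((l.attach.map fun x => sel x.1 (.mk t l' r')) ++
       (l'.attach.map fun y => sel (.mk s l r) y.1) ++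
       (l.attach.flatMap fun x => l'.attach.map fun y => sel x.1 y.1))
      ((r.attach.map fun x => sel x.1 (.mk t l' r')) ++
       (r'.attach.map fun y => sel (.mk s l r) y.1) ++
       (r.attach.flatMap fun x => r'.attach.map fun y => sel x.1 y.1))
termination_by G H => sizeOf G + sizeOf H
decreasing_by
  all_goals first
  | (have h1 := List.sizeOf_lt_of_mem x.2
     have h2 := List.sizeOf_lt_of_mem y.2
     simp only [SGame.mk.sizeOf_spec]; omega)
  | (have h1 := List.sizeOf_lt_of_mem x.2
     simp only [SGame.mk.sizeOf_spec]; omega)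
  | (have h2 := List.sizeOf_lt_of_mem y.2
     simp only [SGame.mk.sizeOf_spec]; omega)

/-- Add `a` points (for Left) to every score of the game. -/
def addScore (a : ℝ) : SGame → SGame
  | .mk s l r => .mk (a + s) (l.attach.map fun x => addScore a x.1)
      (r.attach.map fun x => addScore a x.1)
termination_by g => sizeOf g
decreasing_by
  all_goals
    have := List.sizeOf_lt_of_mem x.2
    simp only [SGame.mk.sizeOf_spec]; omega

/-- The negative of a game: swap the roles of Left and Right and negate all scores. -/
def neg : SGame → SGame
  | .mk s l r => .mk (-s) (r.attach.map fun x => neg x.1) (l.attach.map fun x => neg x.1)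
termination_by g => sizeOf g
decreasing_by
  all_goals
    have := List.sizeOf_lt_of_mem x.2
    simp only [SGame.mk.sizeOf_spec]; omega

/-- Impartial scoring game. -/
def Impartial : SGame → Prop
  | .mk s l r =>
    (l = [] ↔ r = []) ∧
    (∀ x ∈ l, ∃ y ∈ r, addScore (-s) x = neg (addScore (-s) y)) ∧
    (∀ x ∈ l.attach, Impartial x.1) ∧ (∀ y ∈ r.attach, Impartial y.1)
termination_by g => sizeOf g
decreasing_by
  all_goals
    first
    | (have := List.sizeOf_lt_of_mem x.2
       simp only [SGame.mk.sizeOf_spec]; omega)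
    | (have := List.sizeOf_lt_of_mem y.2
       simp only [SGame.mk.sizeOf_spec]; omega)

/-- Sequential join: play all of `G` first, then continue in `H`
    with the accumulated score. -/
def seq : SGame → SGame → SGame
  | .mk s [] [], H => addScore s H
  | .mk s l r, H =>
    .mk (s + H.score) (l.attach.map fun x => seq x.1 H)
      (r.attach.map fun x => seq x.1 H)
termination_by G _ => sizeOf G
decreasing_by
  all_goals
    have := List.sizeOf_lt_of_mem x.2
    simp only [SGame.mk.sizeOf_spec]; omega

/-- Outcome classes for scoring games. -/
inductive Outcome : Type where
  | L | R | N | P | Tie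
deriving DecidableEq

open Classical in
/-- The outcome class of a scoring game, determined by the signs of the
    optimal final scores with Left, resp. Right, moving first. -/
noncomputable def outcome (G : SGame) : Outcome :=
  if 0 < leftScore G ∧ rightScore G < 0 then .N
  else if leftScore G < 0 ∧ 0 < rightScore G then .P
  else if leftScore G = 0 ∧ rightScore G = 0 then .Tie
  else if 0 ≤ leftScore G ∧ 0 ≤ rightScore G then .L
  else .R

end SGame

namespace SGame

theorem leftScore_mk (s : ℝ) (l r : List SGame) :
    leftScore (SGame.mk s l r) = WithBot.unbotD s ((l.map rightScore).maximum) := by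
  rw [leftScore]; simp

theorem rightScore_mk (s : ℝ) (l r : List SGame) :
    rightScore (SGame.mk s l r) = WithTop.untopD s ((r.map leftScore).minimum) := by
  rw [rightScore]; simp

theorem leftScore_nil (s : ℝ) (r : List SGame) : leftScore (SGame.mk s [] r) = s := by
  rw [leftScore_mk]; simp

theorem rightScore_nil (s : ℝ) (l : List SGame) : rightScore (SGame.mk s l []) = s := by
  rw [rightScore_mk]; simp

theorem rightScore_le_leftScore {s : ℝ} {l r : List SGame} {x : SGame} (hx : x ∈ l) :
    rightScore x ≤ leftScore (SGame.mk s l r) := by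
  have h' : l.map rightScore ≠ [] := by
    simpa using List.ne_nil_of_mem hx
  obtain ⟨m, hm⟩ := WithBot.ne_bot_iff_exists.1 (List.maximum_ne_bot_of_ne_nil h')
  have hle : (rightScore x : WithBot ℝ) ≤ (m : WithBot ℝ) :=
    hm ▸ List.le_maximum_of_mem' (List.mem_map_of_mem hx)
  rw [leftScore_mk, ← hm, WithBot.unbotD_coe]
  exact_mod_cast hle

theorem rightScore_le_leftScore' {s : ℝ} {l r : List SGame} {x : SGame} (hx : x ∈ r) :
    rightScore (SGame.mk s l r) ≤ leftScore x := by
  have h' : r.map leftScore ≠ [] := by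
    simpa using List.ne_nil_of_mem hx
  obtain ⟨m, hm⟩ := WithTop.ne_top_iff_exists.1 (List.minimum_ne_top_of_ne_nil h')
  have hle : (m : WithTop ℝ) ≤ (leftScore x : WithTop ℝ) :=
    hm ▸ List.minimum_le_of_mem' (List.mem_map_of_mem hx)
  rw [rightScore_mk, ← hm, WithTop.untopD_coe]
  exact_mod_cast hle

theorem exists_leftScore_eq (s : ℝ) {l : List SGame} (r : List SGame) (h : l ≠ []) :
    ∃ x ∈ l, leftScore (SGame.mk s l r) = rightScore x := by
  have h' : l.map rightScore ≠ [] := by simpa using h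
  obtain ⟨m, hm⟩ := WithBot.ne_bot_iff_exists.1 (List.maximum_ne_bot_of_ne_nil h')
  have hmem := List.maximum_mem hm.symm
  rw [List.mem_map] at hmem
  obtain ⟨x, hx, hfx⟩ := hmem
  exact ⟨x, hx, by rw [leftScore_mk, ← hm, WithBot.unbotD_coe, hfx]⟩

theorem exists_rightScore_eq (s : ℝ) (l : List SGame) {r : List SGame} (h : r ≠ []) :
    ∃ x ∈ r, rightScore (SGame.mk s l r) = leftScore x := by
  have h' : r.map leftScore ≠ [] := by simpa using h
  obtain ⟨m, hm⟩ := WithTop.ne_top_iff_exists.1 (List.minimum_ne_top_of_ne_nil h')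
  have hmem := List.minimum_mem hm.symm
  rw [List.mem_map] at hmem
  obtain ⟨x, hx, hfx⟩ := hmem
  exact ⟨x, hx, by rw [rightScore_mk, ← hm, WithTop.untopD_coe, hfx]⟩

theorem sel_mk (s t : ℝ) (l r l' r' : List SGame) :
    sel (SGame.mk s l r) (SGame.mk t l' r') = SGame.mk (s + t)
      (l.map (fun x => sel x (SGame.mk t l' r')) ++ l'.map (fun y => sel (SGame.mk s l r) y) ++
        l.flatMap (fun x => l'.map fun y => sel x y))
      (r.map (fun x => sel x (SGame.mk t l' r')) ++ r'.map (fun y => sel (SGame.mk s l r) y) ++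
        r.flatMap (fun x => r'.map fun y => sel x y)) := by
  rw [sel]; simp

def zz : SGame := SGame.mk 0 [] []
def jj : SGame := SGame.mk 0 [zz] [zz]
def ii : SGame := SGame.mk 0 [jj] [jj]

theorem sel_zz (t : ℝ) (l' r' : List SGame) :
    sel zz (SGame.mk t l' r') = SGame.mk t (l'.map (sel zz)) (r'.map (sel zz)) := by
  unfold zz; rw [sel_mk]; simp

theorem sel_jj (t : ℝ) (l' r' : List SGame) :
    sel jj (SGame.mk t l' r') = SGame.mk t
      ([sel zz (SGame.mk t l' r')] ++ l'.map (sel jj) ++ l'.map (sel zz))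
      ([sel zz (SGame.mk t l' r')] ++ r'.map (sel jj) ++ r'.map (sel zz)) := by
  conv_lhs => rw [jj]
  rw [sel_mk]
  simp [jj]

theorem sel_ii (t : ℝ) (l' r' : List SGame) :
    sel ii (SGame.mk t l' r') = SGame.mk t
      ([sel jj (SGame.mk t l' r')] ++ l'.map (sel ii) ++ l'.map (sel jj))
      ([sel jj (SGame.mk t l' r')] ++ r'.map (sel ii) ++ r'.map (sel jj)) := by
  conv_lhs => rw [ii]
  rw [sel_mk]
  simp [ii]

theorem selz_eq : ∀ H : SGame,
    leftScore (sel zz H) = leftScore H ∧ rightScore (sel zz H) = rightScore H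
  | .mk t l r => by
    rw [sel_zz]
    constructor
    · rw [leftScore_mk, leftScore_mk, List.map_map]
      have h : l.map (rightScore ∘ sel zz) = l.map rightScore :=
        List.map_congr_left fun x hx => (selz_eq x).2
      rw [h]
    · rw [rightScore_mk, rightScore_mk, List.map_map]
      have h : r.map (leftScore ∘ sel zz) = r.map leftScore :=
        List.map_congr_left fun x hx => (selz_eq x).1
      rw [h]
termination_by H => sizeOf H
decreasing_by
  all_goals
    have := List.sizeOf_lt_of_mem hx
    simp only [SGame.mk.sizeOf_spec]
    omega

end SGame

namespace SGame

theorem impartial_sub {t : ℝ} {l r : List SGame} (h : Impartial (SGame.mk t l r)) :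
    (l = [] ↔ r = []) ∧ (∀ x ∈ l, Impartial x) ∧ (∀ x ∈ r, Impartial x) := by
  rw [Impartial] at h
  exact ⟨h.1, fun x hx => h.2.2.1 ⟨x, hx⟩ (List.mem_attach _ _),
    fun x hx => h.2.2.2 ⟨x, hx⟩ (List.mem_attach _ _)⟩

theorem selj_eq : ∀ H : SGame, Impartial H →
    leftScore (sel jj H) = max (leftScore H) (rightScore H) ∧
    rightScore (sel jj H) = min (leftScore H) (rightScore H)
  | .mk t l r => fun hI => by
    obtain ⟨hlr, hL, hR⟩ := impartial_sub hI
    rw [sel_jj]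
    have hzH := selz_eq (SGame.mk t l r)
    constructor
    · apply le_antisymm
      · obtain ⟨w, hw, heq⟩ := exists_leftScore_eq t _ (by simp :
          [sel zz (SGame.mk t l r)] ++ l.map (sel jj) ++ l.map (sel zz) ≠ [])
        rw [heq]
        simp only [List.mem_append, List.mem_map, List.mem_singleton] at hw
        rcases hw with (rfl | ⟨y, hy, rfl⟩) | ⟨y, hy, rfl⟩
        · rw [hzH.2]; exact le_max_right _ _
        · calc rightScore (sel jj y) = min (leftScore y) (rightScore y) :=
                (selj_eq y (hL y hy)).2
            _ ≤ rightScore y := min_le_right _ _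
            _ ≤ leftScore (SGame.mk t l r) := rightScore_le_leftScore hy
            _ ≤ _ := le_max_left _ _
        · calc rightScore (sel zz y) = rightScore y := (selz_eq y).2
            _ ≤ leftScore (SGame.mk t l r) := rightScore_le_leftScore hy
            _ ≤ _ := le_max_left _ _
      · rw [max_le_iff]
        have hrH : rightScore (SGame.mk t l r) ≤ leftScore
            (SGame.mk t ([sel zz (SGame.mk t l r)] ++ l.map (sel jj) ++ l.map (sel zz))
              ([sel zz (SGame.mk t l r)] ++ r.map (sel jj) ++ r.map (sel zz))) := by
          rw [← hzH.2]
          exact rightScore_le_leftScore (by simp)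
        refine ⟨?_, hrH⟩
        by_cases hl : l = []
        · have hr : r = [] := hlr.1 hl
          subst hl; subst hr
          have h1 : leftScore (SGame.mk t ([] : List SGame) []) =
              rightScore (SGame.mk t ([] : List SGame) []) := by
            rw [leftScore_nil, rightScore_nil]
          rw [h1]; exact hrH
        · obtain ⟨y, hy, hly⟩ := exists_leftScore_eq t r hl
          rw [hly, ← (selz_eq y).2]
          exact rightScore_le_leftScore (by
            simp only [List.mem_append, List.mem_map, List.mem_singleton]
            exact Or.inr ⟨y, hy, rfl⟩)
    · apply le_antisymm
      · rw [le_min_iff]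
        have hlH : rightScore
            (SGame.mk t ([sel zz (SGame.mk t l r)] ++ l.map (sel jj) ++ l.map (sel zz))
              ([sel zz (SGame.mk t l r)] ++ r.map (sel jj) ++ r.map (sel zz)))
            ≤ leftScore (SGame.mk t l r) := by
          rw [← hzH.1]
          exact rightScore_le_leftScore' (by simp)
        refine ⟨hlH, ?_⟩
        by_cases hr : r = []
        · have hl : l = [] := hlr.2 hr
          subst hl; subst hr
          have h1 : rightScore (SGame.mk t ([] : List SGame) []) =
              leftScore (SGame.mk t ([] : List SGame) []) := by
            rw [leftScore_nil, rightScore_nil]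
          rw [h1]; exact hlH
        · obtain ⟨y, hy, hry⟩ := exists_rightScore_eq t l hr
          rw [hry, ← (selz_eq y).1]
          exact rightScore_le_leftScore' (by
            simp only [List.mem_append, List.mem_map, List.mem_singleton]
            exact Or.inr ⟨y, hy, rfl⟩)
      · obtain ⟨w, hw, heq⟩ := exists_rightScore_eq t _ (by simp :
          [sel zz (SGame.mk t l r)] ++ r.map (sel jj) ++ r.map (sel zz) ≠ [])
        rw [heq]
        simp only [List.mem_append, List.mem_map, List.mem_singleton] at hw
        rcases hw with (rfl | ⟨y, hy, rfl⟩) | ⟨y, hy, rfl⟩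
        · rw [hzH.1]; exact min_le_left _ _
        · calc min (leftScore (SGame.mk t l r)) (rightScore (SGame.mk t l r))
              ≤ rightScore (SGame.mk t l r) := min_le_right _ _
            _ ≤ leftScore y := rightScore_le_leftScore' hy
            _ ≤ max (leftScore y) (rightScore y) := le_max_left _ _
            _ = leftScore (sel jj y) := ((selj_eq y (hR y hy)).1).symm
        · calc min (leftScore (SGame.mk t l r)) (rightScore (SGame.mk t l r))
              ≤ rightScore (SGame.mk t l r) := min_le_right _ _
            _ ≤ leftScore y := rightScore_le_leftScore' hy
            _ = leftScore (sel zz y) := ((selz_eq y).1).symm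
termination_by H => sizeOf H
decreasing_by
  all_goals
    have := List.sizeOf_lt_of_mem hy
    simp only [SGame.mk.sizeOf_spec]
    omega

theorem seli_eq : ∀ H : SGame, Impartial H →
    leftScore (sel ii H) = leftScore H ∧ rightScore (sel ii H) = rightScore H
  | .mk t l r => fun hI => by
    obtain ⟨hlr, hL, hR⟩ := impartial_sub hI
    rw [sel_ii]
    have hjH := selj_eq (SGame.mk t l r) hI
    constructor
    · apply le_antisymm
      · obtain ⟨w, hw, heq⟩ := exists_leftScore_eq t _ (by simp :
          [sel jj (SGame.mk t l r)] ++ l.map (sel ii) ++ l.map (sel jj) ≠ [])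
        rw [heq]
        simp only [List.mem_append, List.mem_map, List.mem_singleton] at hw
        rcases hw with (rfl | ⟨y, hy, rfl⟩) | ⟨y, hy, rfl⟩
        · rw [hjH.2]; exact min_le_left _ _
        · calc rightScore (sel ii y) = rightScore y := (seli_eq y (hL y hy)).2
            _ ≤ leftScore (SGame.mk t l r) := rightScore_le_leftScore hy
        · calc rightScore (sel jj y) = min (leftScore y) (rightScore y) :=
                (selj_eq y (hL y hy)).2
            _ ≤ rightScore y := min_le_right _ _
            _ ≤ leftScore (SGame.mk t l r) := rightScore_le_leftScore hy
      · by_cases hl : l = []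
        · have hr : r = [] := hlr.1 hl
          subst hl; subst hr
          have h1 : leftScore (SGame.mk t ([] : List SGame) []) =
              rightScore (sel jj (SGame.mk t ([] : List SGame) [])) := by
            rw [hjH.2, leftScore_nil, rightScore_nil, min_self]
          rw [h1]
          exact rightScore_le_leftScore (by simp)
        · obtain ⟨y, hy, hly⟩ := exists_leftScore_eq t r hl
          rw [hly, ← (seli_eq y (hL y hy)).2]
          exact rightScore_le_leftScore (by
            simp only [List.mem_append, List.mem_map, List.mem_singleton]
            exact Or.inl (Or.inr ⟨y, hy, rfl⟩))
    · apply le_antisymm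
      · by_cases hr : r = []
        · have hl : l = [] := hlr.2 hr
          subst hl; subst hr
          have h1 : rightScore (SGame.mk t ([] : List SGame) []) =
              leftScore (sel jj (SGame.mk t ([] : List SGame) [])) := by
            rw [hjH.1, leftScore_nil, rightScore_nil, max_self]
          rw [h1]
          exact rightScore_le_leftScore' (by simp)
        · obtain ⟨y, hy, hry⟩ := exists_rightScore_eq t l hr
          rw [hry, ← (seli_eq y (hR y hy)).1]
          exact rightScore_le_leftScore' (by
            simp only [List.mem_append, List.mem_map, List.mem_singleton]
            exact Or.inl (Or.inr ⟨y, hy, rfl⟩))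
      · obtain ⟨w, hw, heq⟩ := exists_rightScore_eq t _ (by simp :
          [sel jj (SGame.mk t l r)] ++ r.map (sel ii) ++ r.map (sel jj) ≠ [])
        rw [heq]
        simp only [List.mem_append, List.mem_map, List.mem_singleton] at hw
        rcases hw with (rfl | ⟨y, hy, rfl⟩) | ⟨y, hy, rfl⟩
        · rw [hjH.1]; exact le_max_right _ _
        · calc rightScore (SGame.mk t l r) ≤ leftScore y := rightScore_le_leftScore' hy
            _ = leftScore (sel ii y) := ((seli_eq y (hR y hy)).1).symm
        · calc rightScore (SGame.mk t l r) ≤ leftScore y := rightScore_le_leftScore' hy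
            _ ≤ max (leftScore y) (rightScore y) := le_max_left _ _
            _ = leftScore (sel jj y) := ((selj_eq y (hR y hy)).1).symm
termination_by H => sizeOf H
decreasing_by
  all_goals
    have := List.sizeOf_lt_of_mem hy
    simp only [SGame.mk.sizeOf_spec]
    omega

end SGame

open SGame in
/-- Impartial scoring games form a non-trivial monoid under the selective sum:
the game `i = {{0|0|0}|0|{0|0|0}}` satisfies `i ▽ G ≈ G` for every impartial `G`
(the final scores of `i ▽ G` have the same signs as those of `G`), and `i` is not
isomorphic to `{.|0|.}`. -/
theorem sel_impartial_nontrivial_monoid :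
    (∀ G : SGame, Impartial G →
      let i : SGame := .mk 0 [.mk 0 [.mk 0 [] []] [.mk 0 [] []]]
                            [.mk 0 [.mk 0 [] []] [.mk 0 [] []]]
      (0 < leftScore (sel i G) ↔ 0 < leftScore G) ∧
      (leftScore (sel i G) < 0 ↔ leftScore G < 0) ∧
      (0 < rightScore (sel i G) ↔ 0 < rightScore G) ∧
      (rightScore (sel i G) < 0 ↔ rightScore G < 0)) ∧
    (SGame.mk 0 [SGame.mk 0 [SGame.mk 0 [] []] [SGame.mk 0 [] []]]
              [SGame.mk 0 [SGame.mk 0 [] []] [SGame.mk 0 [] []]] ≠ SGame.mk 0 [] []) := by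
  constructor
  · intro G hG
    have h := SGame.seli_eq G hG
    simp only [SGame.ii, SGame.jj, SGame.zz] at h
    exact ⟨by rw [h.1], by rw [h.1], by rw [h.2], by rw [h.2]⟩
  · intro h
    injection h with _ h1 _
    simp at h1
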